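/- arXiv:2410.15055 — 2 statements merged into one kernel-verified Lean document; each statement's English description precedes it below -/
import Mathlib

section
/- Define the chemical collision frequency ν_1(v) = ∫_{ℝ^3×S^2} H(|v−v_*|^2 − 2E/m_{12}) B(|v−v_*|, cosθ) μ_2(v_*) dv_* dσ, where H is the Heaviside function, B(g, cosθ) = C (g_{12}^{34})^{(γ+1)/2} g^{(γ−1)/2} b(cosθ) with g_{12}^{34} = sqrt((m_{12}/m_{34})(g^2 − 2E/m_{12})), C > 0, b ≥ 0 integrable with positive integral over S^2, and μ_2 a centered Gaussian with mass c_2 > 0. Then there exist explicit constants 0 < ν̲ ≤ ν̄ such that ν̲ ⟨v⟩^γ ≤ ν_1(v) ≤ ν̄ ⟨v⟩^γ for all v ∈ ℝ^3. -/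
open MeasureTheory RealInnerProductSpace
open Metric Set Pointwise


local notation "E3" => EuclideanSpace ℝ (Fin 3)

noncomputable def sphMap (f : E3 ≃ₗᵢ[ℝ] E3) : sphere (0:E3) 1 → sphere (0:E3) 1 := fun σ =>
  ⟨f σ, by rw [mem_sphere_zero_iff_norm, f.norm_map]; exact mem_sphere_zero_iff_norm.1 σ.2⟩

theorem sphMap_continuous (f : E3 ≃ₗᵢ[ℝ] E3) : Continuous (sphMap f) :=
  Continuous.subtype_mk (f.continuous.comp continuous_subtype_val) _

theorem sphMap_image (f : E3 ≃ₗᵢ[ℝ] E3) (s : Set (sphere (0:E3) 1)) :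
    (↑) '' (sphMap f ⁻¹' s) = f ⁻¹' ((↑) '' s) := by
  ext x
  constructor
  · rintro ⟨σ, hσ, rfl⟩
    exact ⟨sphMap f σ, hσ, rfl⟩
  · rintro ⟨τ, hτ, hfx⟩
    have hx : x ∈ sphere (0:E3) 1 := by
      rw [mem_sphere_zero_iff_norm, ← f.norm_map x, ← hfx]
      exact mem_sphere_zero_iff_norm.1 τ.2
    refine ⟨⟨x, hx⟩, ?_, rfl⟩
    have : sphMap f ⟨x, hx⟩ = τ := Subtype.ext hfx.symm
    show sphMap f ⟨x, hx⟩ ∈ s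
    rw [this]; exact hτ

theorem smul_preimage (f : E3 ≃ₗᵢ[ℝ] E3) (t : Set E3) :
    Ioo (0:ℝ) 1 • (f ⁻¹' t) = f ⁻¹' (Ioo (0:ℝ) 1 • t) := by
  ext x
  simp only [Set.mem_smul, Set.mem_preimage]
  constructor
  · rintro ⟨c, hc, y, hy, rfl⟩
    exact ⟨c, hc, f y, hy, (f.map_smul c y).symm⟩
  · rintro ⟨c, hc, z, hz, hzx⟩
    refine ⟨c, hc, f.symm z, by simpa using hz, ?_⟩
    apply f.injective
    rw [f.map_smul, f.apply_symm_apply, hzx]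

theorem sphMap_measurePreserving (f : E3 ≃ₗᵢ[ℝ] E3) :
    MeasurePreserving (sphMap f) volume.toSphere volume.toSphere := by
  refine ⟨(sphMap_continuous f).measurable, ?_⟩
  refine Measure.ext fun s hs => ?_
  rw [Measure.map_apply (sphMap_continuous f).measurable hs,
    Measure.toSphere_apply' _ (hs.preimage (sphMap_continuous f).measurable),
    Measure.toSphere_apply' _ hs, sphMap_image, smul_preimage,
    f.measurePreserving.measure_preimage_emb f.toHomeomorph.measurableEmbedding]

noncomputable def sphHomeo (f : E3 ≃ₗᵢ[ℝ] E3) : sphere (0:E3) 1 ≃ₜ sphere (0:E3) 1 where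
  toFun := sphMap f
  invFun := sphMap f.symm
  left_inv := fun σ => Subtype.ext (f.symm_apply_apply σ)
  right_inv := fun σ => Subtype.ext (f.apply_symm_apply σ)
  continuous_toFun := sphMap_continuous f
  continuous_invFun := sphMap_continuous f.symm

theorem integral_b_sphere_eq (b : ℝ → ℝ) (e : E3) (he : ‖e‖ = 1) (e' : E3) (he' : ‖e'‖ = 1) :
    ∫ σ : sphere (0:E3) 1, b ⟪e, (σ:E3)⟫ ∂(volume : Measure E3).toSphere
      = ∫ σ : sphere (0:E3) 1, b ⟪e', (σ:E3)⟫ ∂(volume : Measure E3).toSphere := by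
  set f : E3 ≃ₗᵢ[ℝ] E3 := Submodule.reflection (ℝ ∙ (e' - e))ᗮ with hf
  have hfe' : f e' = e := Submodule.reflection_sub (he'.trans he.symm)
  have hmp := sphMap_measurePreserving f
  have hcomp := hmp.integral_comp (sphHomeo f).measurableEmbedding (fun σ => b ⟪e, (σ:E3)⟫)
  rw [← hcomp]
  refine integral_congr_ae (Filter.Eventually.of_forall fun σ => ?_)
  show b ⟪e, (f σ : E3)⟫ = b ⟪e', (σ:E3)⟫
  rw [← hfe', f.inner_map_map]

theorem integrable_exp_norm_sq (bb : ℝ) (hbb : 0 < bb) :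
    Integrable (fun v : E3 => Real.exp (-bb * ‖v‖ ^ 2)) := by
  have h := (GaussianFourier.integrable_cexp_neg_mul_sq_norm_add
    (V := E3) (b := (bb : ℂ)) (by simpa using hbb) 0 0).norm
  refine h.congr (Filter.Eventually.of_forall fun v => ?_)
  simp only [Complex.norm_exp]
  rw [show (-(bb:ℂ) * (‖v‖:ℝ) ^ 2 + 0 * ((inner ℝ (0:E3) v : ℝ) : ℂ)) = ((-bb * ‖v‖^2 : ℝ) : ℂ)
    by push_cast; ring, Complex.ofReal_re]

theorem exp_aux (bb x : ℝ) (hbb : 0 < bb) (hx : 0 ≤ x) :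
    (1 + x) * Real.exp (-bb * x ^ 2)
      ≤ Real.exp (1 / (2 * bb)) * Real.exp (-(bb / 2) * x ^ 2) := by
  have h1 : (1 + x) * Real.exp (-bb * x ^ 2) ≤ Real.exp x * Real.exp (-bb * x ^ 2) :=
    mul_le_mul_of_nonneg_right (by linarith [Real.add_one_le_exp x]) (Real.exp_nonneg _)
  refine h1.trans ?_
  rw [← Real.exp_add, ← Real.exp_add]
  apply Real.exp_le_exp.2
  have h2 : x - (bb/2) * x ^ 2 ≤ 1 / (2 * bb) := by
    rw [le_div_iff₀ (by positivity : (0:ℝ) < 2 * bb)]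
    nlinarith [sq_nonneg (bb * x - 1)]
  linarith

theorem integrable_one_add_norm_exp (bb : ℝ) (hbb : 0 < bb) :
    Integrable (fun v : E3 => (1 + ‖v‖) * Real.exp (-bb * ‖v‖ ^ 2)) := by
  refine Integrable.mono' ((integrable_exp_norm_sq (bb/2) (by positivity)).const_mul
    (Real.exp (1 / (2 * bb)))) (Continuous.aestronglyMeasurable (by continuity))
    (Filter.Eventually.of_forall fun v => ?_)
  rw [Real.norm_eq_abs, abs_of_nonneg (by positivity)]
  exact exp_aux bb ‖v‖ hbb (norm_nonneg v)

theorem rpow_prod_eq (Cc κ γ g : ℝ) (hκ : 0 ≤ κ) (hg : 0 < g) :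
    Cc * (Real.sqrt κ * g) ^ ((γ + 1) / 2) * g ^ ((γ - 1) / 2)
      = Cc * κ ^ ((γ + 1) / 4) * g ^ γ := by
  rw [Real.mul_rpow (Real.sqrt_nonneg _) hg.le, Real.sqrt_eq_rpow,
    ← Real.rpow_mul hκ, mul_assoc, mul_assoc, ← Real.rpow_add hg]
  have e1 : (1:ℝ)/2 * ((γ + 1) / 2) = (γ + 1) / 4 := by ring
  have e2 : (γ + 1) / 2 + (γ - 1) / 2 = γ := by ring
  rw [e1, e2, mul_assoc]

theorem Bfun_upper (Cc κ γ aa g : ℝ) (hC : 0 ≤ Cc) (hκ : 0 ≤ κ) (hγ0 : 0 ≤ γ)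
    (haa : 0 ≤ aa) (hg : 0 ≤ g) :
    (if 0 ≤ g ^ 2 - aa then (1:ℝ) else 0) * Cc *
        (Real.sqrt (κ * (g ^ 2 - aa))) ^ ((γ + 1) / 2) * g ^ ((γ - 1) / 2)
      ≤ Cc * κ ^ ((γ + 1) / 4) * g ^ γ := by
  have hrhs : 0 ≤ Cc * κ ^ ((γ + 1) / 4) * g ^ γ := by positivity
  split_ifs with h
  · rcases eq_or_lt_of_le hg with hg0 | hgpos
    · have haa0 : aa = 0 := by nlinarith
      subst haa0
      rw [← hg0]
      norm_num
      rw [Real.zero_rpow (by positivity : ((γ:ℝ) + 1) / 2 ≠ 0)]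
      rw [mul_zero, zero_mul]
      positivity
    · have key1 : Real.sqrt (κ * (g ^ 2 - aa)) ≤ Real.sqrt κ * g := by
        calc Real.sqrt (κ * (g ^ 2 - aa)) ≤ Real.sqrt (κ * g ^ 2) :=
              Real.sqrt_le_sqrt (by nlinarith)
          _ = Real.sqrt κ * g := by rw [Real.sqrt_mul hκ, Real.sqrt_sq hgpos.le]
      rw [one_mul, ← rpow_prod_eq Cc κ γ g hκ hgpos]
      gcongr
      all_goals first | positivity | exact key1 | exact Real.sqrt_nonneg _
  · rw [zero_mul, zero_mul, zero_mul]
    exact hrhs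

theorem Bfun_lower (Cc κ γ aa g : ℝ) (hC : 0 ≤ Cc) (hκ : 0 ≤ κ) (hγ0 : 0 ≤ γ)
    (haa : 0 ≤ aa) (hg0 : 0 ≤ g) (hg : 2 * aa + 1 ≤ g ^ 2) :
    Cc * (κ / 2) ^ ((γ + 1) / 4) * g ^ γ
      ≤ (if 0 ≤ g ^ 2 - aa then (1:ℝ) else 0) * Cc *
          (Real.sqrt (κ * (g ^ 2 - aa))) ^ ((γ + 1) / 2) * g ^ ((γ - 1) / 2) := by
  have hgpos : 0 < g := by nlinarith
  have hif : (0:ℝ) ≤ g ^ 2 - aa := by nlinarith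
  rw [if_pos hif, one_mul]
  have key : Real.sqrt (κ / 2) * g ≤ Real.sqrt (κ * (g ^ 2 - aa)) := by
    calc Real.sqrt (κ / 2) * g = Real.sqrt (κ / 2 * g ^ 2) := by
          rw [Real.sqrt_mul (by positivity), Real.sqrt_sq hgpos.le]
      _ ≤ Real.sqrt (κ * (g ^ 2 - aa)) := Real.sqrt_le_sqrt (by nlinarith)
  rw [← rpow_prod_eq Cc (κ/2) γ g (by positivity) hgpos]
  gcongr
  all_goals first | positivity | exact key

set_option maxHeartbeats 2000000 in
/-- Equivalence of the endothermic chemical collision frequency `ν_1^CH` with the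
weight `⟨v⟩^γ`, with explicit constants. -/
theorem chemical_collision_frequency_nu1_bounds
    (m1 m2 m3 m4 E γ C c2 : ℝ)
    (hm1 : 0 < m1) (hm2 : 0 < m2) (hm3 : 0 < m3) (hm4 : 0 < m4)
    (hmass : m1 + m2 = m3 + m4) (hE : 0 ≤ E) (hγ0 : 0 ≤ γ) (hγ1 : γ ≤ 1)
    (hC : 0 < C) (hc2 : 0 < c2)
    (m12 m34 : ℝ)
    (hm12 : m12 = m1 * m2 / (m1 + m2)) (hm34 : m34 = m3 * m4 / (m3 + m4))
    (sph : Measure (Metric.sphere (0 : EuclideanSpace ℝ (Fin 3)) 1))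
    (hsph : sph = (volume : Measure (EuclideanSpace ℝ (Fin 3))).toSphere)
    (H : ℝ → ℝ) (hH : ∀ x, H x = if 0 ≤ x then 1 else 0)
    (b : ℝ → ℝ) (hb : ∀ x, 0 ≤ b x)
    (hbint : ∀ e : EuclideanSpace ℝ (Fin 3), ‖e‖ = 1 →
      Integrable (fun σ : Metric.sphere (0 : EuclideanSpace ℝ (Fin 3)) 1 =>
        b ⟪e, (σ : EuclideanSpace ℝ (Fin 3))⟫) sph)
    (hbpos : ∀ e : EuclideanSpace ℝ (Fin 3), ‖e‖ = 1 →
      0 < ∫ σ : Metric.sphere (0 : EuclideanSpace ℝ (Fin 3)) 1,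
        b ⟪e, (σ : EuclideanSpace ℝ (Fin 3))⟫ ∂sph)
    (μ2 : EuclideanSpace ℝ (Fin 3) → ℝ)
    (hμ2 : ∀ w, μ2 w = c2 * (m2 / (2 * Real.pi)) ^ ((3 : ℝ) / 2) * Real.exp (-m2 * ‖w‖ ^ 2 / 2))
    (ν1 : EuclideanSpace ℝ (Fin 3) → ℝ)
    (hν1 : ∀ v, ν1 v = ∫ vs : EuclideanSpace ℝ (Fin 3),
      (∫ σ : Metric.sphere (0 : EuclideanSpace ℝ (Fin 3)) 1,
        H (‖v - vs‖ ^ 2 - 2 * E / m12) *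
          (C * (Real.sqrt ((m12 / m34) * (‖v - vs‖ ^ 2 - 2 * E / m12))) ^ ((γ + 1) / 2) *
            ‖v - vs‖ ^ ((γ - 1) / 2) *
            b ⟪(‖v - vs‖⁻¹) • (v - vs), (σ : EuclideanSpace ℝ (Fin 3))⟫) *
          μ2 vs ∂sph)) :
    ∃ νlow νup : ℝ, 0 < νlow ∧ νlow ≤ νup ∧
      ∀ v : EuclideanSpace ℝ (Fin 3),
        νlow * (1 + ‖v‖ ^ 2) ^ (γ / 2) ≤ ν1 v ∧ ν1 v ≤ νup * (1 + ‖v‖ ^ 2) ^ (γ / 2) := by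
  have hm12pos : 0 < m12 := by rw [hm12]; positivity
  have hm34pos : 0 < m34 := by rw [hm34]; positivity
  have hκpos : 0 < m12 / m34 := by positivity
  have hapos : 0 ≤ 2 * E / m12 := by positivity
  set κ := m12 / m34 with hκdef
  set a := 2 * E / m12 with hadef
  have hMpos : 0 < (m2 / (2 * Real.pi)) ^ ((3 : ℝ) / 2) :=
    Real.rpow_pos_of_pos (by positivity) _
  set M := (m2 / (2 * Real.pi)) ^ ((3 : ℝ) / 2) with hMdef
  have hμ2' : ∀ w : EuclideanSpace ℝ (Fin 3),
      μ2 w = (c2 * M) * Real.exp (-(m2 / 2) * ‖w‖ ^ 2) := by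
    intro w; rw [hμ2 w]; ring_nf
  have hμ2nonneg : ∀ w : EuclideanSpace ℝ (Fin 3), 0 ≤ μ2 w := by
    intro w; rw [hμ2' w]; positivity
  have hμ2cont : Continuous μ2 := by
    have h : μ2 = fun w : EuclideanSpace ℝ (Fin 3) =>
        (c2 * M) * Real.exp (-(m2 / 2) * ‖w‖ ^ 2) := funext hμ2'
    rw [h]
    exact continuous_const.mul (Real.continuous_exp.comp (continuous_const.mul ((continuous_norm).pow 2)))
  -- the sphere integral of b is a positive constant
  set e0 : EuclideanSpace ℝ (Fin 3) := EuclideanSpace.single (0 : Fin 3) (1 : ℝ) with he0def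
  have he0 : ‖e0‖ = 1 := by rw [he0def, EuclideanSpace.norm_single]; norm_num
  set Ib := ∫ σ : Metric.sphere (0 : EuclideanSpace ℝ (Fin 3)) 1,
    b ⟪e0, (σ : EuclideanSpace ℝ (Fin 3))⟫ ∂sph with hIbdef
  have hIbpos : 0 < Ib := hbpos e0 he0
  have hIbeq : ∀ e : EuclideanSpace ℝ (Fin 3), ‖e‖ = 1 →
      (∫ σ : Metric.sphere (0 : EuclideanSpace ℝ (Fin 3)) 1,
        b ⟪e, (σ : EuclideanSpace ℝ (Fin 3))⟫ ∂sph) = Ib := by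
    intro e he
    rw [hIbdef, hsph]
    exact integral_b_sphere_eq b e he e0 he0
  -- the reduced kernel
  set k : EuclideanSpace ℝ (Fin 3) → EuclideanSpace ℝ (Fin 3) → ℝ := fun v vs =>
    (if 0 ≤ ‖v - vs‖ ^ 2 - a then (1:ℝ) else 0) * C *
      (Real.sqrt (κ * (‖v - vs‖ ^ 2 - a))) ^ ((γ + 1) / 2) *
      ‖v - vs‖ ^ ((γ - 1) / 2) * μ2 vs with hkdef
  have hknonneg : ∀ v vs, 0 ≤ k v vs := by
    intro v vs
    rw [hkdef]
    dsimp only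
    split_ifs with h
    · exact mul_nonneg (by positivity) (hμ2nonneg vs)
    · rw [zero_mul, zero_mul, zero_mul, zero_mul]
  -- Step 1 : ν1 v = (∫ k v) * Ib
  have step1 : ∀ v : EuclideanSpace ℝ (Fin 3),
      ν1 v = (∫ vs : EuclideanSpace ℝ (Fin 3), k v vs) * Ib := by
    intro v
    rw [hν1 v, ← integral_mul_const]
    refine integral_congr_ae ?_
    have hae : ∀ᵐ (vs : EuclideanSpace ℝ (Fin 3)) ∂(volume), vs ≠ v := by
      have hs : {vs : EuclideanSpace ℝ (Fin 3) | ¬ vs ≠ v} = {v} := by ext; simp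
      rw [ae_iff, hs]
      exact measure_singleton v
    filter_upwards [hae] with vs hvs
    have h0 : v - vs ≠ 0 := sub_ne_zero.2 (Ne.symm hvs)
    have hunit : ‖(‖v - vs‖⁻¹) • (v - vs)‖ = 1 := by
      rw [norm_smul, norm_inv, norm_norm, inv_mul_cancel₀ (norm_ne_zero_iff.2 h0)]
    have hrw : (fun σ : Metric.sphere (0 : EuclideanSpace ℝ (Fin 3)) 1 =>
        H (‖v - vs‖ ^ 2 - a) *
          (C * (Real.sqrt (κ * (‖v - vs‖ ^ 2 - a))) ^ ((γ + 1) / 2) *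
            ‖v - vs‖ ^ ((γ - 1) / 2) *
            b ⟪(‖v - vs‖⁻¹) • (v - vs), (σ : EuclideanSpace ℝ (Fin 3))⟫) * μ2 vs)
        = fun σ : Metric.sphere (0 : EuclideanSpace ℝ (Fin 3)) 1 =>
          (H (‖v - vs‖ ^ 2 - a) * C * (Real.sqrt (κ * (‖v - vs‖ ^ 2 - a))) ^ ((γ + 1) / 2) *
            ‖v - vs‖ ^ ((γ - 1) / 2) * μ2 vs) *
            b ⟪(‖v - vs‖⁻¹) • (v - vs), (σ : EuclideanSpace ℝ (Fin 3))⟫ :=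
      funext fun σ => by ring
    show (∫ σ : Metric.sphere (0 : EuclideanSpace ℝ (Fin 3)) 1, _ ∂sph) = k v vs * Ib
    rw [hrw, integral_const_mul, hIbeq _ hunit, hkdef]
    dsimp only
    rw [hH]
  -- weight comparison
  have hgW : ∀ v vs : EuclideanSpace ℝ (Fin 3),
      ‖v - vs‖ ^ γ ≤ (1 + ‖v‖ ^ 2) ^ (γ / 2) * (1 + ‖vs‖) := by
    intro v vs
    have hP1 : (1:ℝ) ≤ (1 + ‖v‖ ^ 2) ^ ((1:ℝ) / 2) := by
      rw [← Real.sqrt_eq_rpow]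
      have h := Real.sqrt_le_sqrt (by nlinarith [sq_nonneg ‖v‖] : (1:ℝ) ≤ 1 + ‖v‖ ^ 2)
      rwa [Real.sqrt_one] at h
    have hPv : ‖v‖ ≤ (1 + ‖v‖ ^ 2) ^ ((1:ℝ) / 2) := by
      rw [← Real.sqrt_eq_rpow]
      have h := Real.sqrt_le_sqrt (by nlinarith : ‖v‖ ^ 2 ≤ 1 + ‖v‖ ^ 2)
      rwa [Real.sqrt_sq (norm_nonneg v)] at h
    have h1 : ‖v - vs‖ ≤ (1 + ‖v‖ ^ 2) ^ ((1:ℝ) / 2) * (1 + ‖vs‖) := by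
      have h2 := norm_sub_le v vs
      nlinarith [norm_nonneg vs]
    calc ‖v - vs‖ ^ γ ≤ ((1 + ‖v‖ ^ 2) ^ ((1:ℝ) / 2) * (1 + ‖vs‖)) ^ γ :=
          Real.rpow_le_rpow (norm_nonneg _) h1 hγ0
      _ = (1 + ‖v‖ ^ 2) ^ (γ / 2) * (1 + ‖vs‖) ^ γ := by
          rw [Real.mul_rpow (by positivity) (by positivity),
            ← Real.rpow_mul (by positivity), show (1:ℝ) / 2 * γ = γ / 2 by ring]
      _ ≤ (1 + ‖v‖ ^ 2) ^ (γ / 2) * (1 + ‖vs‖) := by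
          have h3 := Real.rpow_le_rpow_of_exponent_le
            (by linarith [norm_nonneg vs] : (1:ℝ) ≤ 1 + ‖vs‖) hγ1
          rw [Real.rpow_one] at h3
          exact mul_le_mul_of_nonneg_left h3 (by positivity)
  -- pointwise upper bound
  have hkup : ∀ v vs : EuclideanSpace ℝ (Fin 3),
      k v vs ≤ (C * κ ^ ((γ + 1) / 4) * ((1 + ‖v‖ ^ 2) ^ (γ / 2)) * (c2 * M)) *
        ((1 + ‖vs‖) * Real.exp (-(m2 / 2) * ‖vs‖ ^ 2)) := by
    intro v vs
    rw [hkdef]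
    dsimp only
    refine le_trans (mul_le_mul_of_nonneg_right
      (Bfun_upper C κ γ a ‖v - vs‖ hC.le hκpos.le hγ0 hapos (norm_nonneg _))
      (hμ2nonneg vs)) ?_
    rw [hμ2' vs]
    have hmul := mul_le_mul_of_nonneg_right
      (mul_le_mul_of_nonneg_left (hgW v vs)
        (by positivity : (0:ℝ) ≤ C * κ ^ ((γ + 1) / 4)))
      (by positivity : (0:ℝ) ≤ (c2 * M) * Real.exp (-(m2 / 2) * ‖vs‖ ^ 2))
    exact hmul.trans (le_of_eq (by ring))
  -- measurability and integrability of k v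
  have hkmeas : ∀ v : EuclideanSpace ℝ (Fin 3), Measurable (k v) := by
    intro v
    rw [hkdef]
    have hg : Measurable fun vs : EuclideanSpace ℝ (Fin 3) => ‖v - vs‖ :=
      (continuous_const.sub continuous_id).norm.measurable
    have h1 : Measurable fun vs : EuclideanSpace ℝ (Fin 3) =>
        (if 0 ≤ ‖v - vs‖ ^ 2 - a then (1:ℝ) else 0) := by
      refine Measurable.ite ?_ measurable_const measurable_const
      exact measurableSet_le measurable_const ((hg.pow_const 2).sub measurable_const)
    have h2 : Measurable fun vs : EuclideanSpace ℝ (Fin 3) =>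
        (Real.sqrt (κ * (‖v - vs‖ ^ 2 - a))) ^ ((γ + 1) / 2) := by fun_prop
    have h3 : Measurable fun vs : EuclideanSpace ℝ (Fin 3) =>
        ‖v - vs‖ ^ ((γ - 1) / 2) := by fun_prop
    exact ((((h1.mul measurable_const).mul h2).mul h3).mul hμ2cont.measurable)
  have hupint : ∀ v : EuclideanSpace ℝ (Fin 3), Integrable (fun vs : EuclideanSpace ℝ (Fin 3) =>
      (C * κ ^ ((γ + 1) / 4) * ((1 + ‖v‖ ^ 2) ^ (γ / 2)) * (c2 * M)) *
        ((1 + ‖vs‖) * Real.exp (-(m2 / 2) * ‖vs‖ ^ 2))) := fun v =>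
    (integrable_one_add_norm_exp (m2 / 2) (by positivity)).const_mul _
  have hkint : ∀ v : EuclideanSpace ℝ (Fin 3), Integrable (k v) := by
    intro v
    refine Integrable.mono' (hupint v) (hkmeas v).aestronglyMeasurable
      (Filter.Eventually.of_forall fun vs => ?_)
    rw [Real.norm_eq_abs, abs_of_nonneg (hknonneg v vs)]
    exact hkup v vs
  -- upper bound on the integral
  set Ifin := ∫ vs : EuclideanSpace ℝ (Fin 3),
    (1 + ‖vs‖) * Real.exp (-(m2 / 2) * ‖vs‖ ^ 2) with hIfin
  have hJup : ∀ v : EuclideanSpace ℝ (Fin 3),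
      (∫ vs : EuclideanSpace ℝ (Fin 3), k v vs)
        ≤ (C * κ ^ ((γ + 1) / 4) * (c2 * M) * Ifin) * ((1 + ‖v‖ ^ 2) ^ (γ / 2)) := by
    intro v
    have h := integral_mono_of_nonneg (Filter.Eventually.of_forall (hknonneg v)) (hupint v)
      (Filter.Eventually.of_forall (hkup v))
    rw [integral_const_mul] at h
    refine h.trans (le_of_eq ?_)
    rw [hIfin]
    ring
  -- the annulus and half-annulus
  have hR1 : (1:ℝ) ≤ Real.sqrt (2 * a + 1) := by
    have h := Real.sqrt_le_sqrt (by linarith : (1:ℝ) ≤ 2 * a + 1)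
    rwa [Real.sqrt_one] at h
  set R := Real.sqrt (2 * a + 1) with hRdef
  have hRsq : R ^ 2 = 2 * a + 1 := Real.sq_sqrt (by linarith)
  set ann : Set (EuclideanSpace ℝ (Fin 3)) := {vs | R ≤ ‖vs‖ ∧ ‖vs‖ ≤ R + 1} with hanndef
  set A : EuclideanSpace ℝ (Fin 3) → Set (EuclideanSpace ℝ (Fin 3)) := fun v =>
    {vs | ⟪v, vs⟫ ≤ 0 ∧ R ≤ ‖vs‖ ∧ ‖vs‖ ≤ R + 1} with hAdef
  have hAmeas : ∀ v, MeasurableSet (A v) := by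
    intro v
    rw [hAdef]
    have h1 : MeasurableSet {vs : EuclideanSpace ℝ (Fin 3) | ⟪v, vs⟫ ≤ 0} :=
      measurableSet_le (Continuous.inner continuous_const continuous_id).measurable
        measurable_const
    have h2 : MeasurableSet {vs : EuclideanSpace ℝ (Fin 3) | R ≤ ‖vs‖} :=
      measurableSet_le measurable_const continuous_norm.measurable
    have h3 : MeasurableSet {vs : EuclideanSpace ℝ (Fin 3) | ‖vs‖ ≤ R + 1} :=
      measurableSet_le continuous_norm.measurable measurable_const
    exact (h1.inter (h2.inter h3) : _)
  have hAsub : ∀ v, A v ⊆ Metric.closedBall 0 (R + 1) := by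
    intro v vs hvs
    rw [Metric.mem_closedBall, dist_zero_right]
    exact hvs.2.2
  have hAfin : ∀ v, volume (A v) ≠ ⊤ := fun v =>
    ((measure_mono (hAsub v)).trans_lt (measure_closedBall_lt_top)).ne
  have hannfin : volume ann ≠ ⊤ := by
    refine ((measure_mono ?_).trans_lt
      (measure_closedBall_lt_top (x := (0 : EuclideanSpace ℝ (Fin 3))) (r := R + 1))).ne
    intro vs hvs
    rw [Metric.mem_closedBall, dist_zero_right]
    exact hvs.2
  have hannpos : 0 < volume ann := by
    set p : EuclideanSpace ℝ (Fin 3) := (R + 1/2) • e0 with hpdef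
    have hpnorm : ‖p‖ = R + 1/2 := by
      rw [hpdef, norm_smul, he0, Real.norm_eq_abs, abs_of_pos (by linarith), mul_one]
    have hOopen : IsOpen {vs : EuclideanSpace ℝ (Fin 3) | R < ‖vs‖ ∧ ‖vs‖ < R + 1} :=
      (isOpen_lt continuous_const continuous_norm).inter
        (isOpen_lt continuous_norm continuous_const)
    have hOsub : {vs : EuclideanSpace ℝ (Fin 3) | R < ‖vs‖ ∧ ‖vs‖ < R + 1} ⊆ ann := by
      intro vs hvs; exact ⟨hvs.1.le, hvs.2.le⟩
    refine lt_of_lt_of_le (hOopen.measure_pos volume ⟨p, ?_⟩) (measure_mono hOsub)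
    constructor <;> rw [hpnorm] <;> linarith
  have hvolA : ∀ v, (volume ann).toReal / 2 ≤ (volume (A v)).toReal := by
    intro v
    have hsub : ann ⊆ A v ∪ -(A v) := by
      intro vs hvs
      rcases le_or_gt ⟪v, vs⟫ 0 with h | h
      · exact Set.mem_union_left _ ⟨h, hvs.1, hvs.2⟩
      · refine Set.mem_union_right _ ?_
        rw [Set.mem_neg]
        refine ⟨?_, ?_, ?_⟩
        · rw [inner_neg_right]; linarith
        · rw [norm_neg]; exact hvs.1
        · rw [norm_neg]; exact hvs.2
    have hneg : volume (-(A v)) = volume (A v) := by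
      have hemb := (LinearIsometryEquiv.neg ℝ
        (E := EuclideanSpace ℝ (Fin 3))).toHomeomorph.measurableEmbedding
      have h := (LinearIsometryEquiv.neg ℝ
        (E := EuclideanSpace ℝ (Fin 3))).measurePreserving.measure_preimage_emb hemb (A v)
      have hset : -(A v) = ⇑(LinearIsometryEquiv.neg ℝ
          (E := EuclideanSpace ℝ (Fin 3))) ⁻¹' (A v) := by
        ext x
        rw [Set.mem_neg, Set.mem_preimage, LinearIsometryEquiv.coe_neg]
      rw [hset, h]
    have h2 : volume ann ≤ 2 * volume (A v) := by
      refine (measure_mono hsub).trans ((measure_union_le _ _).trans ?_)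
      rw [hneg, two_mul]
    have h3 := ENNReal.toReal_le_toReal hannfin
      (by
        refine ENNReal.mul_ne_top (by norm_num) (hAfin v)) |>.mpr h2
    rw [ENNReal.toReal_mul, ENNReal.toReal_ofNat] at h3
    linarith
  -- lower pointwise bound on A v
  have hc0pos : 0 < C * (κ / 2) ^ ((γ + 1) / 4) *
      ((c2 * M) * Real.exp (-(m2 / 2) * (R + 1) ^ 2)) := by positivity
  set c0 := C * (κ / 2) ^ ((γ + 1) / 4) *
    ((c2 * M) * Real.exp (-(m2 / 2) * (R + 1) ^ 2)) with hc0def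
  have hklow : ∀ v : EuclideanSpace ℝ (Fin 3), ∀ vs ∈ A v,
      c0 * (1 + ‖v‖ ^ 2) ^ (γ / 2) ≤ k v vs := by
    intro v vs hvs
    obtain ⟨hinner, hlo, hhi⟩ := hvs
    have hg2 : ‖v‖ ^ 2 + (2 * a + 1) ≤ ‖v - vs‖ ^ 2 := by
      have hexp := norm_sub_sq_real v vs
      have hvs2 : R ^ 2 ≤ ‖vs‖ ^ 2 := pow_le_pow_left₀ (Real.sqrt_nonneg _) hlo 2
      rw [hRsq] at hvs2
      nlinarith
    have hG : (1 + ‖v‖ ^ 2) ^ (γ / 2) ≤ ‖v - vs‖ ^ γ := by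
      have h1 : (1 + ‖v‖ ^ 2) ≤ ‖v - vs‖ ^ 2 := by nlinarith
      have h2 : (1 + ‖v‖ ^ 2) ^ ((1:ℝ) / 2) ≤ ‖v - vs‖ := by
        have h3 := Real.sqrt_le_sqrt h1
        rw [Real.sqrt_sq (norm_nonneg _)] at h3
        rwa [← Real.sqrt_eq_rpow]
      calc (1 + ‖v‖ ^ 2) ^ (γ / 2) = ((1 + ‖v‖ ^ 2) ^ ((1:ℝ) / 2)) ^ γ := by
            rw [← Real.rpow_mul (by positivity), show (1:ℝ) / 2 * γ = γ / 2 by ring]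
        _ ≤ ‖v - vs‖ ^ γ := Real.rpow_le_rpow (by positivity) h2 hγ0
    have hμ2lo : (c2 * M) * Real.exp (-(m2 / 2) * (R + 1) ^ 2) ≤ μ2 vs := by
      rw [hμ2' vs]
      have hsq : ‖vs‖ ^ 2 ≤ (R + 1) ^ 2 := pow_le_pow_left₀ (norm_nonneg _) hhi 2
      have hexp := Real.exp_le_exp.2
        (by nlinarith : -(m2 / 2) * (R + 1) ^ 2 ≤ -(m2 / 2) * ‖vs‖ ^ 2)
      exact mul_le_mul_of_nonneg_left hexp (by positivity)
    have hBlow := Bfun_lower C κ γ a ‖v - vs‖ hC.le hκpos.le hγ0 hapos (norm_nonneg _)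
      (by nlinarith : 2 * a + 1 ≤ ‖v - vs‖ ^ 2)
    rw [hkdef]
    dsimp only
    calc c0 * (1 + ‖v‖ ^ 2) ^ (γ / 2)
        = (C * (κ / 2) ^ ((γ + 1) / 4) * (1 + ‖v‖ ^ 2) ^ (γ / 2)) *
            ((c2 * M) * Real.exp (-(m2 / 2) * (R + 1) ^ 2)) := by rw [hc0def]; ring
      _ ≤ (C * (κ / 2) ^ ((γ + 1) / 4) * ‖v - vs‖ ^ γ) * μ2 vs :=
          mul_le_mul (mul_le_mul_of_nonneg_left hG (by positivity)) hμ2lo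
            (by positivity) (by positivity)
      _ ≤ (if 0 ≤ ‖v - vs‖ ^ 2 - a then (1:ℝ) else 0) * C *
            (Real.sqrt (κ * (‖v - vs‖ ^ 2 - a))) ^ ((γ + 1) / 2) *
            ‖v - vs‖ ^ ((γ - 1) / 2) * μ2 vs :=
          mul_le_mul_of_nonneg_right hBlow (hμ2nonneg vs)
  -- lower bound on the integral
  have htann : 0 < (volume ann).toReal := ENNReal.toReal_pos hannpos.ne' hannfin
  have hJlow : ∀ v : EuclideanSpace ℝ (Fin 3),
      (c0 * ((volume ann).toReal / 2)) * (1 + ‖v‖ ^ 2) ^ (γ / 2)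
        ≤ ∫ vs : EuclideanSpace ℝ (Fin 3), k v vs := by
    intro v
    have hW : (0:ℝ) ≤ (1 + ‖v‖ ^ 2) ^ (γ / 2) := by positivity
    have h1 : ∫ _ in A v, (c0 * (1 + ‖v‖ ^ 2) ^ (γ / 2)) ∂volume
        ≤ ∫ vs in A v, k v vs ∂volume :=
      setIntegral_mono_on (integrableOn_const (hAfin v))
        ((hkint v).integrableOn) (hAmeas v) (fun vs hvs => hklow v vs hvs)
    rw [setIntegral_const, smul_eq_mul] at h1
    have h2 : ∫ vs in A v, k v vs ∂volume ≤ ∫ vs, k v vs :=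
      setIntegral_le_integral (hkint v) (Filter.Eventually.of_forall (hknonneg v))
    have h0 : (c0 * ((volume ann).toReal / 2)) * (1 + ‖v‖ ^ 2) ^ (γ / 2)
        ≤ (volume (A v)).toReal * (c0 * (1 + ‖v‖ ^ 2) ^ (γ / 2)) := by
      calc (c0 * ((volume ann).toReal / 2)) * (1 + ‖v‖ ^ 2) ^ (γ / 2)
          = ((volume ann).toReal / 2) * (c0 * (1 + ‖v‖ ^ 2) ^ (γ / 2)) := by ring
        _ ≤ (volume (A v)).toReal * (c0 * (1 + ‖v‖ ^ 2) ^ (γ / 2)) :=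
            mul_le_mul_of_nonneg_right (hvolA v) (mul_nonneg hc0pos.le hW)
    exact h0.trans (h1.trans h2)
  -- conclusion
  refine ⟨(c0 * ((volume ann).toReal / 2)) * Ib,
    (C * κ ^ ((γ + 1) / 4) * (c2 * M) * Ifin) * Ib, ?_, ?_, ?_⟩
  · exact mul_pos (mul_pos hc0pos (by linarith)) hIbpos
  · have h0l : (c0 * ((volume ann).toReal / 2)) * Ib * ((1 + ‖(0 : EuclideanSpace ℝ (Fin 3))‖ ^ 2) ^ (γ / 2)) ≤ ν1 0 := by
      rw [step1 0]
      calc (c0 * ((volume ann).toReal / 2)) * Ib * ((1 + ‖(0 : EuclideanSpace ℝ (Fin 3))‖ ^ 2) ^ (γ / 2))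
          = ((c0 * ((volume ann).toReal / 2)) * ((1 + ‖(0 : EuclideanSpace ℝ (Fin 3))‖ ^ 2) ^ (γ / 2))) * Ib := by ring
        _ ≤ (∫ vs : EuclideanSpace ℝ (Fin 3), k 0 vs) * Ib :=
            mul_le_mul_of_nonneg_right (hJlow 0) hIbpos.le
    have h0u : ν1 0 ≤ (C * κ ^ ((γ + 1) / 4) * (c2 * M) * Ifin) * Ib * ((1 + ‖(0 : EuclideanSpace ℝ (Fin 3))‖ ^ 2) ^ (γ / 2)) := by
      rw [step1 0]
      calc (∫ vs : EuclideanSpace ℝ (Fin 3), k 0 vs) * Ib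
          ≤ ((C * κ ^ ((γ + 1) / 4) * (c2 * M) * Ifin) * ((1 + ‖(0 : EuclideanSpace ℝ (Fin 3))‖ ^ 2) ^ (γ / 2))) * Ib :=
            mul_le_mul_of_nonneg_right (hJup 0) hIbpos.le
        _ = _ := by ring
    have hW0 : ((1:ℝ) + ‖(0 : EuclideanSpace ℝ (Fin 3))‖ ^ 2) ^ (γ / 2) = 1 := by
      rw [norm_zero, show ((1:ℝ) + 0 ^ 2) = 1 by norm_num, Real.one_rpow]
    rw [hW0, mul_one] at h0l h0u
    exact h0l.trans h0u
  · intro v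
    constructor
    · rw [step1 v]
      calc (c0 * ((volume ann).toReal / 2)) * Ib * ((1 + ‖v‖ ^ 2) ^ (γ / 2))
          = ((c0 * ((volume ann).toReal / 2)) * ((1 + ‖v‖ ^ 2) ^ (γ / 2))) * Ib := by ring
        _ ≤ (∫ vs : EuclideanSpace ℝ (Fin 3), k v vs) * Ib :=
            mul_le_mul_of_nonneg_right (hJlow v) hIbpos.le
    · rw [step1 v]
      calc (∫ vs : EuclideanSpace ℝ (Fin 3), k v vs) * Ib
          ≤ ((C * κ ^ ((γ + 1) / 4) * (c2 * M) * Ifin) * ((1 + ‖v‖ ^ 2) ^ (γ / 2))) * Ib :=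
            mul_le_mul_of_nonneg_right (hJup v) hIbpos.le
        _ = _ := by ring
end

section
/- Let h_i : ℝ^3 → ℝ, 1 ≤ i ≤ 4, be measurable functions such that (i) for every pair (i,j) and all admissible elastic collision velocities, h_i(v) + h_j(v_*) = h_i(v') + h_j(v'_*), where (v', v'_*) are the elastic post-collisional velocities for masses (m_i, m_j). Then there exist n_i ∈ ℝ, u ∈ ℝ^3, e ∈ ℝ such that h_i(v) = n_i + m_i u·v + m_i e |v|^2/2 for all i and a.e. v. -/
open MeasureTheory Pointwise RealInnerProductSpace

noncomputable abbrev E3 := EuclideanSpace ℝ (Fin 3)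

lemma steinhaus_real {E : Set ℝ} (hE : MeasurableSet E) (hpos : 0 < volume E) :
    ∃ δ > 0, ∀ x : ℝ, |x| < δ → ∃ a ∈ E, ∃ b ∈ E, x = a - b := by
  obtain ⟨K, hKE, hKc, hKpos⟩ : ∃ K ⊆ E, IsCompact K ∧ 0 < volume K := by
    rcases hE.exists_lt_isCompact hpos with ⟨K, hKE, hKc, hK⟩
    exact ⟨K, hKE, hKc, hK⟩
  obtain ⟨U, hKU, hUo, hU⟩ : ∃ U ⊇ K, IsOpen U ∧ volume U < volume K + volume K := by
    rcases K.exists_isOpen_lt_add (hKc.measure_lt_top (μ := volume)).ne hKpos.ne'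
      with ⟨U, hKU, hUo, hU⟩
    exact ⟨U, hKU, hUo, hU⟩
  obtain ⟨δ, hδ, hthick⟩ : ∃ δ > 0, Metric.thickening δ K ⊆ U :=
    hKc.exists_thickening_subset_open hUo hKU
  refine ⟨δ, hδ, fun x hx => ?_⟩
  have hxK : (x +ᵥ K : Set ℝ) ⊆ U := by
    intro y hy
    rcases hy with ⟨k, hk, rfl⟩
    apply hthick
    rw [Metric.mem_thickening_iff]
    exact ⟨k, hk, by simpa [Real.dist_eq] using hx⟩
  have hvol : volume (x +ᵥ K : Set ℝ) = volume K := by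
    simp [measure_vadd]
  have hinter : ((x +ᵥ K : Set ℝ) ∩ K).Nonempty := by
    by_contra hcon
    rw [Set.not_nonempty_iff_eq_empty] at hcon
    have hdisj : Disjoint (x +ᵥ K : Set ℝ) K := Set.disjoint_iff_inter_eq_empty.mpr hcon
    have : volume ((x +ᵥ K : Set ℝ) ∪ K) = volume K + volume K := by
      rw [measure_union hdisj hKc.measurableSet, hvol]
    have hle : volume ((x +ᵥ K : Set ℝ) ∪ K) ≤ volume U :=
      measure_mono (Set.union_subset hxK hKU)
    rw [this] at hle
    exact absurd (lt_of_lt_of_le hU hle) (lt_irrefl _)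
  rcases hinter with ⟨y, ⟨k, hk, rfl⟩, hyK⟩
  exact ⟨x + k, hKE hyK, k, hKE hk, by abel⟩

lemma additive_measurable_linear (f : ℝ → ℝ) (hf : Measurable f)
    (hadd : ∀ x y, f (x + y) = f x + f y) : ∀ x, f x = f 1 * x := by
  set F : ℝ →+ ℝ := AddMonoidHom.mk' f hadd with hF
  have hFf : ∀ x, F x = f x := fun _ => rfl
  have hrat : ∀ (p : ℚ), f (p : ℝ) = f 1 * p := by
    intro p
    have : F ((p : ℚ) • (1 : ℝ)) = (p : ℚ) • F 1 := map_rat_smul F p 1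
    rw [Rat.smul_def, Rat.smul_def] at this
    simp only [hFf] at this
    rw [mul_one] at this; rw [this, mul_comm]
  -- find n with positive measure of A n
  obtain ⟨n, hn⟩ : ∃ n : ℕ, 0 < volume ({x : ℝ | |f x| ≤ n} ∩ Set.Icc 0 1) := by
    by_contra hcon
    push_neg at hcon
    simp only [le_zero_iff] at hcon
    have hcover : Set.Icc (0:ℝ) 1 ⊆ ⋃ n : ℕ, ({x : ℝ | |f x| ≤ n} ∩ Set.Icc 0 1) := by
      intro x hx
      rcases exists_nat_ge |f x| with ⟨n, hn⟩
      exact Set.mem_iUnion.mpr ⟨n, ⟨hn, hx⟩⟩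
    have : volume (Set.Icc (0:ℝ) 1) = 0 := by
      refine measure_mono_null hcover ?_
      exact measure_iUnion_null fun n => hcon n
    simp [Real.volume_Icc] at this
  have hAmeas : MeasurableSet ({x : ℝ | |f x| ≤ n} ∩ Set.Icc 0 1) := by
    exact ((measurableSet_le (hf.abs) measurable_const)).inter measurableSet_Icc
  obtain ⟨δ, hδpos, hδ⟩ := steinhaus_real hAmeas hn
  -- bound on f near zero
  have hbound : ∀ x : ℝ, |x| < δ → |f x| ≤ 2 * n := by
    intro x hx
    obtain ⟨a, ha, b, hb, rfl⟩ := hδ x hx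
    have : f (a - b) = f a - f b := by
      have := map_sub F a b; simpa [hFf] using this
    rw [this]
    have h1 : |f a| ≤ n := ha.1
    have h2 : |f b| ≤ n := hb.1
    calc |f a - f b| ≤ |f a| + |f b| := abs_sub _ _
      _ ≤ 2 * n := by linarith
  -- the defect function
  intro x
  by_contra hne
  set g : ℝ → ℝ := fun y => f y - f 1 * y with hg
  have hgadd : ∀ a b, g (a + b) = g a + g b := by
    intro a b; simp only [hg]; rw [hadd]; ring
  have hgrat : ∀ (p : ℚ), g (p : ℝ) = 0 := by
    intro p; simp only [hg]; rw [hrat]; ring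
  have hgx : g x ≠ 0 := by
    simp only [hg]; intro hc; apply hne; linarith [sub_eq_zero.mp hc]
  set G : ℝ →+ ℝ := AddMonoidHom.mk' g hgadd with hG
  have hGg : ∀ y, G y = g y := fun _ => rfl
  set C : ℝ := 2 * n + |f 1| * δ with hC
  have hgbound : ∀ y : ℝ, |y| < δ → |g y| ≤ C := by
    intro y hy
    have h1 := hbound y hy
    have : |g y| ≤ |f y| + |f 1| * |y| := by
      simp only [hg]
      calc |f y - f 1 * y| ≤ |f y| + |f 1 * y| := abs_sub _ _
        _ = |f y| + |f 1| * |y| := by rw [abs_mul]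
    have h2 : |f 1| * |y| ≤ |f 1| * δ := by
      apply mul_le_mul_of_nonneg_left (le_of_lt hy) (abs_nonneg _)
    linarith
  -- contradiction: |g x| ≤ C / N for all N
  obtain ⟨N, hN⟩ := exists_nat_gt (C / |g x|)
  have hNpos : (0:ℝ) < N + 1 := by positivity
  obtain ⟨p, hp⟩ := exists_rat_near x (div_pos hδpos hNpos)
  -- |x - p| < δ / (N+1)
  have hxq : g x = g (x - p) := by
    have h := hgadd (x - p) p
    rw [sub_add_cancel, hgrat p, add_zero] at h
    exact h
  have hsm : G ((N+1) • (x - (p:ℝ))) = (N+1) • G (x - p) := map_nsmul G _ _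
  have hsmall : |((N:ℝ)+1) * (x - p)| < δ := by
    rw [abs_mul, abs_of_pos hNpos]
    have h1 : |x - (p:ℝ)| < δ / (N+1) := by
      rw [abs_sub_comm] at hp; rw [abs_sub_comm]; exact hp
    calc ((N:ℝ)+1) * |x - p| < ((N:ℝ)+1) * (δ / (N+1)) := by
          exact mul_lt_mul_of_pos_left h1 hNpos
      _ = δ := by field_simp
  have hval : |g (((N:ℝ)+1) * (x - p))| ≤ C := hgbound _ hsmall
  have heq : g (((N:ℝ)+1) * (x - p)) = ((N:ℝ)+1) * g (x - p) := by
    have h1 : ((N+1 : ℕ) : ℝ) * (x - (p:ℝ)) = (N+1 : ℕ) • (x - (p:ℝ)) := by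
      rw [nsmul_eq_mul]
    have h2 := hsm
    rw [hGg, hGg] at h2
    rw [show ((N:ℝ)+1) * (x - (p:ℝ)) = (N+1 : ℕ) • (x - (p:ℝ)) by push_cast [nsmul_eq_mul]; ring]
    rw [h2, nsmul_eq_mul]
    push_cast; ring
  rw [heq, ← hxq, abs_mul, abs_of_pos hNpos] at hval
  have hgxpos : 0 < |g x| := abs_pos.mpr hgx
  have hlt : C < N * |g x| := (div_lt_iff₀ hgxpos).mp hN
  nlinarith [hval]

/-- There is a nonzero vector orthogonal to two given vectors in ℝ³. -/
lemma exists_orth (v w : E3) : ∃ u : E3, u ≠ 0 ∧ ⟪u, v⟫ = 0 ∧ ⟪u, w⟫ = 0 := by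
  set K : Submodule ℝ E3 := Submodule.span ℝ {v, w} with hK
  have hne : K ≠ ⊤ := by
    classical
    intro htop
    have h1 : Module.finrank ℝ K ≤ 2 := by
      have hset : ({v, w} : Set E3) = ↑({v, w} : Finset E3) := by simp
      rw [hK, hset]
      have hfs := finrank_span_finset_le_card (R := ℝ) ({v, w} : Finset E3)
      rw [Set.finrank] at hfs
      exact le_trans hfs (le_trans (Finset.card_insert_le _ _) (by simp))
    have h2 : Module.finrank ℝ E3 = 3 := by simp [finrank_euclideanSpace]
    rw [htop, finrank_top, h2] at h1
    omega
  have horth : Kᗮ ≠ ⊥ := by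
    intro hbot
    exact hne (Submodule.orthogonal_eq_bot_iff.mp hbot)
  obtain ⟨u, huK, hu0⟩ := Submodule.exists_mem_ne_zero_of_ne_bot horth
  refine ⟨u, hu0, ?_, ?_⟩
  · have := huK v (Submodule.subset_span (by simp))
    rwa [real_inner_comm] at this
  · have := huK w (Submodule.subset_span (by simp))
    rwa [real_inner_comm] at this

lemma orth_add_char (g : E3 → ℝ) (hg : Measurable g) (h0 : g 0 = 0)
    (hadd : ∀ v w : E3, ⟪v, w⟫ = 0 → g (v + w) = g v + g w) :
    ∃ (b : E3) (c : ℝ), ∀ v, g v = ⟪b, v⟫ + c * ‖v‖ ^ 2 := by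
  classical
  set p : E3 → ℝ := fun v => (g v + g (-v)) / 2 with hp
  set q : E3 → ℝ := fun v => (g v - g (-v)) / 2 with hq
  have hpq : ∀ v, g v = p v + q v := by intro v; simp [hp, hq]; ring
  have hpmeas : Measurable p := ((hg.add (hg.comp measurable_neg)).div_const 2)
  have hqmeas : Measurable q := ((hg.sub (hg.comp measurable_neg)).div_const 2)
  have hpadd : ∀ v w : E3, ⟪v, w⟫ = 0 → p (v + w) = p v + p w := by
    intro v w hvw
    have h1 := hadd v w hvw
    have h2 : g (-(v + w)) = g (-v) + g (-w) := by
      rw [neg_add]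
      exact hadd (-v) (-w) (by rw [inner_neg_neg]; exact hvw)
    simp only [hp]; rw [h1, h2]; ring
  have hqadd : ∀ v w : E3, ⟪v, w⟫ = 0 → q (v + w) = q v + q w := by
    intro v w hvw
    have h1 := hadd v w hvw
    have h2 : g (-(v + w)) = g (-v) + g (-w) := by
      rw [neg_add]
      exact hadd (-v) (-w) (by rw [inner_neg_neg]; exact hvw)
    simp only [hq]; rw [h1, h2]; ring
  have hpeven : ∀ v, p (-v) = p v := by intro v; simp [hp]; ring
  have hqodd : ∀ v, q (-v) = -q v := by intro v; simp [hq]; ring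
  have hp0 : p 0 = 0 := by simp [hp, h0]
  have hq0 : q 0 = 0 := by simp [hq]
  -- p is constant on spheres
  have hpsphere : ∀ x y : E3, ‖x‖ = ‖y‖ → p x = p y := by
    intro x y hxy
    set v : E3 := (2:ℝ)⁻¹ • (x + y) with hv
    set w : E3 := (2:ℝ)⁻¹ • (x - y) with hw
    have hvw : ⟪v, w⟫ = 0 := by
      simp only [hv, hw, real_inner_smul_left, real_inner_smul_right]
      rw [inner_add_left, inner_sub_right, inner_sub_right,
        real_inner_self_eq_norm_sq, real_inner_self_eq_norm_sq, real_inner_comm x y]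
      rw [hxy]; ring
    have hx : v + w = x := by rw [hv, hw]; module
    have hy : v + -w = y := by rw [hv, hw]; module
    have h1 : p x = p v + p w := by rw [← hx]; exact hpadd v w hvw
    have h2 : p y = p v + p w := by
      rw [← hy, hpadd v (-w) (by rw [inner_neg_right, hvw, neg_zero]), hpeven]
    rw [h1, h2]
  -- Lemma A for q
  have hqA : ∀ v w : E3, 0 ≤ ⟪v, w⟫ → q (v + w) = q v + q w := by
    intro v w hs
    obtain ⟨u0, hu0, huv, huw⟩ := exists_orth v w
    set u : E3 := (Real.sqrt ⟪v, w⟫ / ‖u0‖) • u0 with hu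
    have hnorm : ‖u0‖ ≠ 0 := norm_ne_zero_iff.mpr hu0
    have hvu0 : ⟪v, u0⟫ = 0 := by rw [real_inner_comm]; exact huv
    have hwu0 : ⟪w, u0⟫ = 0 := by rw [real_inner_comm]; exact huw
    have huv' : ⟪v, u⟫ = 0 := by
      rw [hu, real_inner_smul_right, hvu0, mul_zero]
    have huw' : ⟪w, u⟫ = 0 := by
      rw [hu, real_inner_smul_right, hwu0, mul_zero]
    have hscal : ∀ (a r : ℝ), r ≠ 0 → a / r * (a / r * r ^ 2) = a * a := by
      intro a r hr; field_simp
    have huu : ⟪u, u⟫ = ⟪v, w⟫ := by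
      rw [hu, real_inner_smul_left, real_inner_smul_right, real_inner_self_eq_norm_sq,
        hscal _ _ hnorm, Real.mul_self_sqrt hs]
    have hkey : ⟪v + u, w - u⟫ = 0 := by
      have h1 : ⟪u, w⟫ = 0 := by rw [real_inner_comm]; exact huw'
      rw [inner_add_left, inner_sub_right, inner_sub_right, huv', h1, huu]
      ring
    have hsum : (v + u) + (w - u) = v + w := by abel
    calc q (v + w) = q ((v + u) + (w - u)) := by rw [hsum]
      _ = q (v + u) + q (w - u) := hqadd _ _ hkey
      _ = (q v + q u) + (q w + q (-u)) := by
          rw [hqadd v u huv', sub_eq_add_neg, hqadd w (-u) (by rw [inner_neg_right, huw', neg_zero])]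
      _ = q v + q w := by rw [hqodd]; ring
  -- q is additive along lines
  have hqline' : ∀ (x : E3) (s t : ℝ), t < 0 → 0 < s → q ((s + t) • x) = q (s • x) + q (t • x) := by
    intro x s t ht hs
    rcases le_or_gt 0 (s + t) with hst | hst
    · have h1 : 0 ≤ ⟪(s + t) • x, (-t) • x⟫ := by
        rw [real_inner_smul_left, real_inner_smul_right, real_inner_self_eq_norm_sq]
        have h0' : 0 ≤ (s + t) * (-t) := mul_nonneg hst (by linarith)
        nlinarith [sq_nonneg ‖x‖]
      have h2 := hqA _ _ h1
      rw [← add_smul] at h2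
      have h3 : s + t + -t = s := by ring
      rw [h3] at h2
      have h4 : q ((-t) • x) = - q (t • x) := by rw [neg_smul, hqodd]
      rw [h4] at h2
      linarith
    · have h1 : 0 ≤ ⟪(s + t) • x, (-s) • x⟫ := by
        rw [real_inner_smul_left, real_inner_smul_right, real_inner_self_eq_norm_sq]
        have h0' : 0 ≤ (s + t) * (-s) := by nlinarith
        nlinarith [sq_nonneg ‖x‖]
      have h2 := hqA _ _ h1
      rw [← add_smul] at h2
      have h3 : s + t + -s = t := by ring
      rw [h3] at h2
      have h4 : q ((-s) • x) = - q (s • x) := by rw [neg_smul, hqodd]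
      rw [h4] at h2
      linarith
  have hqline : ∀ (x : E3) (s t : ℝ), q ((s + t) • x) = q (s • x) + q (t • x) := by
    intro x s t
    rcases le_or_gt 0 (s * t) with h | h
    · rw [add_smul]
      apply hqA
      rw [real_inner_smul_left, real_inner_smul_right, real_inner_self_eq_norm_sq]
      nlinarith [sq_nonneg ‖x‖]
    · rcases mul_neg_iff.mp h with ⟨hs, ht⟩ | ⟨hs, ht⟩
      · exact hqline' x s t ht hs
      · rw [add_comm s t, add_comm (q (s • x))]
        exact hqline' x t s hs ht
  -- coordinate axes
  set e : Fin 3 → E3 := fun i => EuclideanSpace.single i (1:ℝ) with he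
  have hnorme : ∀ i, ‖e i‖ = 1 := by intro i; simp [he]
  have hinner_e : ∀ i j, i ≠ j → ⟪e i, e j⟫ = 0 := by
    intro i j hij
    simp [he, EuclideanSpace.inner_single_left, EuclideanSpace.single_apply,
      if_neg hij.symm, hij]
  have hq_coord : ∀ (i : Fin 3) (t : ℝ), q (t • e i) = q (e i) * t := by
    intro i t
    have hmeas : Measurable (fun t : ℝ => q (t • e i)) :=
      hqmeas.comp ((continuous_id.smul continuous_const).measurable)
    have hadd' : ∀ s t : ℝ, q ((s + t) • e i) = q (s • e i) + q (t • e i) :=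
      fun s t => hqline (e i) s t
    have := additive_measurable_linear (fun t : ℝ => q (t • e i)) hmeas hadd' t
    simpa [one_smul] using this
  have hdecomp : ∀ v : E3, v = v 0 • e 0 + (v 1 • e 1 + v 2 • e 2) := by
    intro v
    ext i
    fin_cases i <;>
      simp [he, EuclideanSpace.single_apply, PiLp.add_apply, PiLp.smul_apply]
  have hqv : ∀ v : E3, q v = q (e 0) * v 0 + q (e 1) * v 1 + q (e 2) * v 2 := by
    intro v
    have ho12 : ⟪v 1 • e 1, v 2 • e 2⟫ = 0 := by
      rw [real_inner_smul_left, real_inner_smul_right, hinner_e 1 2 (by decide)]; ring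
    have ho0 : ⟪v 0 • e 0, v 1 • e 1 + v 2 • e 2⟫ = 0 := by
      rw [inner_add_right, real_inner_smul_left, real_inner_smul_right,
        real_inner_smul_left, real_inner_smul_right,
        hinner_e 0 1 (by decide), hinner_e 0 2 (by decide)]
      ring
    calc q v = q (v 0 • e 0 + (v 1 • e 1 + v 2 • e 2)) := by rw [← hdecomp]
      _ = q (v 0 • e 0) + (q (v 1 • e 1) + q (v 2 • e 2)) := by
          rw [hqadd _ _ ho0, hqadd _ _ ho12]
      _ = q (e 0) * v 0 + q (e 1) * v 1 + q (e 2) * v 2 := by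
          rw [hq_coord 0, hq_coord 1, hq_coord 2]; ring
  -- the even part
  set f : ℝ → ℝ := fun t => p (Real.sqrt t • e 0) with hf
  have hfmeas : Measurable f :=
    hpmeas.comp ((Real.continuous_sqrt.smul continuous_const).measurable)
  have hnormsmul : ∀ (a : ℝ) (i : Fin 3), 0 ≤ a → ‖a • e i‖ = a := by
    intro a i ha
    rw [norm_smul, hnorme, Real.norm_eq_abs, abs_of_nonneg ha, mul_one]
  have hfadd : ∀ s t : ℝ, 0 ≤ s → 0 ≤ t → f (s + t) = f s + f t := by
    intro s t hs ht
    have horth : ⟪Real.sqrt s • e 0, Real.sqrt t • e 1⟫ = 0 := by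
      rw [real_inner_smul_left, real_inner_smul_right, hinner_e 0 1 (by decide)]; ring
    have hnorm1 : ‖Real.sqrt (s + t) • e 0‖ = ‖Real.sqrt s • e 0 + Real.sqrt t • e 1‖ := by
      rw [hnormsmul _ _ (Real.sqrt_nonneg _)]
      have hsq : ‖Real.sqrt s • e 0 + Real.sqrt t • e 1‖ ^ 2 = s + t := by
        rw [norm_add_sq_real, horth, hnormsmul _ _ (Real.sqrt_nonneg _),
          hnormsmul _ _ (Real.sqrt_nonneg _), Real.sq_sqrt hs, Real.sq_sqrt ht]
        ring
      have := congrArg Real.sqrt hsq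
      rwa [Real.sqrt_sq (norm_nonneg _), eq_comm] at this
    have hnorm2 : ‖Real.sqrt t • e 1‖ = ‖Real.sqrt t • e 0‖ := by
      rw [hnormsmul _ _ (Real.sqrt_nonneg _), hnormsmul _ _ (Real.sqrt_nonneg _)]
    calc f (s + t) = p (Real.sqrt s • e 0 + Real.sqrt t • e 1) := hpsphere _ _ hnorm1
      _ = p (Real.sqrt s • e 0) + p (Real.sqrt t • e 1) := hpadd _ _ horth
      _ = f s + f t := by rw [hpsphere _ _ hnorm2]
  have hf0 : f 0 = 0 := by simp [hf, hp0]
  set F : ℝ → ℝ := fun t => if 0 ≤ t then f t else -f (-t) with hF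
  have hFmeas : Measurable F := by
    apply Measurable.ite (measurableSet_le measurable_const measurable_id) hfmeas
    exact (hfmeas.comp measurable_neg).neg
  have hkeyF : ∀ s t : ℝ, 0 ≤ s → F (s + t) = F s + F t := by
    intro s t hs
    rcases le_or_gt 0 t with ht | ht
    · have hst : 0 ≤ s + t := by linarith
      simp only [hF, if_pos hst, if_pos hs, if_pos ht]
      exact hfadd s t hs ht
    · rcases le_or_gt 0 (s + t) with hst | hst
      · have h1 : f s = f (s + t) + f (-t) := by
          have h2 := hfadd (s + t) (-t) hst (by linarith)
          rw [show s + t + -t = s by ring] at h2; exact h2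
        simp only [hF, if_pos hst, if_pos hs, if_neg (not_le.mpr ht)]
        linarith
      · have h1 : f (-t) = f (-(s + t)) + f s := by
          have h2 := hfadd (-(s + t)) s (by linarith) hs
          rw [show -(s + t) + s = -t by ring] at h2; exact h2
        simp only [hF, if_neg (not_le.mpr hst), if_pos hs, if_neg (not_le.mpr ht)]
        linarith
  have hFadd : ∀ s t : ℝ, F (s + t) = F s + F t := by
    intro s t
    rcases le_or_gt 0 s with hs | hs
    · exact hkeyF s t hs
    · rcases le_or_gt 0 t with ht | ht
      · rw [add_comm, add_comm (F s)]; exact hkeyF t s ht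
      · have hst : s + t < 0 := by linarith
        simp only [hF, if_neg (not_le.mpr hst), if_neg (not_le.mpr hs), if_neg (not_le.mpr ht)]
        have h2 := hfadd (-s) (-t) (by linarith) (by linarith)
        rw [show -s + -t = -(s + t) by ring] at h2
        linarith
  have hFlin := additive_measurable_linear F hFmeas hFadd
  have hF1 : F 1 = p (e 0) := by
    simp only [hF, if_pos (zero_le_one (α := ℝ))]
    simp [hf, Real.sqrt_one, one_smul]
  have hpv : ∀ v : E3, p v = p (e 0) * ‖v‖ ^ 2 := by
    intro v
    have h1 : ‖(‖v‖ : ℝ) • e 0‖ = ‖v‖ := hnormsmul _ _ (norm_nonneg v)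
    have h2 : p v = f (‖v‖ ^ 2) := by
      rw [hf]
      simp only []
      rw [Real.sqrt_sq (norm_nonneg v)]
      exact hpsphere v _ h1.symm
    have h3 : F (‖v‖ ^ 2) = f (‖v‖ ^ 2) := by
      rw [hF]; simp only [if_pos (sq_nonneg ‖v‖)]
    rw [h2, ← h3, hFlin, hF1, mul_comm]
  -- assemble
  refine ⟨q (e 0) • e 0 + (q (e 1) • e 1 + q (e 2) • e 2), p (e 0), fun v => ?_⟩
  have hinnerb : ⟪q (e 0) • e 0 + (q (e 1) • e 1 + q (e 2) • e 2), v⟫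
      = q (e 0) * v 0 + q (e 1) * v 1 + q (e 2) * v 2 := by
    rw [inner_add_left, inner_add_left, real_inner_smul_left, real_inner_smul_left,
      real_inner_smul_left]
    have h0' : ⟪e 0, v⟫ = v 0 := by simp [he, EuclideanSpace.inner_single_left]
    have h1' : ⟪e 1, v⟫ = v 1 := by simp [he, EuclideanSpace.inner_single_left]
    have h2' : ⟪e 2, v⟫ = v 2 := by simp [he, EuclideanSpace.inner_single_left]
    rw [h0', h1', h2']; ring
  rw [hpq v, hqv v, hpv v, hinnerb]
  ring

set_option maxHeartbeats 1000000 in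
/-- Characterization of elastic collision invariants for a 4-species mixture:
any measurable family satisfying the elastic Cauchy functional equations is,
almost everywhere, of the form `n_i + m_i u·v + m_i e |v|^2/2`. -/
theorem elastic_collision_invariants
    (m : Fin 4 → ℝ) (hm : ∀ i, 0 < m i)
    (h : Fin 4 → EuclideanSpace ℝ (Fin 3) → ℝ)
    (hmeas : ∀ i, Measurable (h i))
    (hcauchy : ∀ i j : Fin 4, ∀ v vs v' vs' : EuclideanSpace ℝ (Fin 3),
      m i • v + m j • vs = m i • v' + m j • vs' →
      (1 / 2) * m i * ‖v‖ ^ 2 + (1 / 2) * m j * ‖vs‖ ^ 2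
        = (1 / 2) * m i * ‖v'‖ ^ 2 + (1 / 2) * m j * ‖vs'‖ ^ 2 →
      h i v + h j vs = h i v' + h j vs') :
    ∃ (n : Fin 4 → ℝ) (u : EuclideanSpace ℝ (Fin 3)) (e : ℝ),
      ∀ i : Fin 4, ∀ᵐ v : EuclideanSpace ℝ (Fin 3),
        h i v = n i + m i * ⟪u, v⟫ + m i * e * ‖v‖ ^ 2 / 2 := by
  -- step 1: each h i is of the form h i 0 + ⟪b i, v⟫ + c i ‖v‖²
  have hchar : ∀ i, ∃ (b : E3) (c : ℝ), ∀ v, h i v = h i 0 + (⟪b, v⟫ + c * ‖v‖ ^ 2) := by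
    intro i
    have hadd : ∀ v w : E3, ⟪v, w⟫ = 0 →
        (h i (v + w) - h i 0) = (h i v - h i 0) + (h i w - h i 0) := by
      intro v w hvw
      have hmom : m i • v + m i • w = m i • (v + w) + m i • (0 : E3) := by
        rw [smul_add, smul_zero, add_zero]
      have hnorm : ‖v + w‖ ^ 2 = ‖v‖ ^ 2 + ‖w‖ ^ 2 := by
        rw [norm_add_sq_real, hvw]; ring
      have hen : (1 / 2) * m i * ‖v‖ ^ 2 + (1 / 2) * m i * ‖w‖ ^ 2
          = (1 / 2) * m i * ‖v + w‖ ^ 2 + (1 / 2) * m i * ‖(0 : E3)‖ ^ 2 := by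
        rw [hnorm, norm_zero]; ring
      have := hcauchy i i v w (v + w) 0 hmom hen
      linarith
    obtain ⟨b, c, hbc⟩ := orth_add_char (fun v => h i v - h i 0)
      ((hmeas i).sub measurable_const) (by simp) hadd
    exact ⟨b, c, fun v => by have := hbc v; linarith⟩
  choose b c hbc using hchar
  -- step 2: cross-species relations
  have hcross : ∀ i j : Fin 4, (m j • b i = m i • b j) ∧ (m j * c i = m i * c j) := by
    intro i j
    set M : ℝ := m i + m j with hM
    have hMpos : 0 < M := by have := hm i; have := hm j; rw [hM]; linarith
    have hMne : M ≠ 0 := ne_of_gt hMpos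
    set lam : ℝ := (m i - m j) / M with hlam
    set mu : ℝ := 2 * m i / M with hmu
    have hscal1 : m i * lam + m j * mu = m i := by
      rw [hlam, hmu]; field_simp; ring
    have hEq : ∀ x : E3, h i x + h j 0 = h i (lam • x) + h j (mu • x) := by
      intro x
      apply hcauchy i j x 0 (lam • x) (mu • x)
      · rw [smul_zero, add_zero, smul_smul, smul_smul, ← add_smul, hscal1]
      · have h1 : ‖lam • x‖ ^ 2 = lam ^ 2 * ‖x‖ ^ 2 := by
          rw [norm_smul, mul_pow, Real.norm_eq_abs, sq_abs]
        have h2 : ‖mu • x‖ ^ 2 = mu ^ 2 * ‖x‖ ^ 2 := by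
          rw [norm_smul, mul_pow, Real.norm_eq_abs, sq_abs]
        rw [h1, h2, norm_zero]
        have hscal2 : (1 / 2) * m i = (1 / 2) * m i * lam ^ 2 + (1 / 2) * m j * mu ^ 2 := by
          rw [hlam, hmu]; field_simp; ring
        nlinarith [hscal2, sq_nonneg ‖x‖]
    -- substitute the explicit forms
    have hE : ∀ x : E3, ⟪b i, x⟫ + c i * ‖x‖ ^ 2
        = lam * ⟪b i, x⟫ + c i * lam ^ 2 * ‖x‖ ^ 2
          + mu * ⟪b j, x⟫ + c j * mu ^ 2 * ‖x‖ ^ 2 := by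
      intro x
      have h0 := hEq x
      rw [hbc i x, hbc j 0, hbc i (lam • x), hbc j (mu • x)] at h0
      have h1 : ‖lam • x‖ ^ 2 = lam ^ 2 * ‖x‖ ^ 2 := by
        rw [norm_smul, mul_pow, Real.norm_eq_abs, sq_abs]
      have h2 : ‖mu • x‖ ^ 2 = mu ^ 2 * ‖x‖ ^ 2 := by
        rw [norm_smul, mul_pow, Real.norm_eq_abs, sq_abs]
      rw [h1, h2, real_inner_smul_right, real_inner_smul_right] at h0
      simp only [inner_zero_right, norm_zero] at h0
      nlinarith [h0]
    -- odd part: vector relation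
    have hodd : ∀ x : E3, ⟪b i - lam • b i - mu • b j, x⟫ = 0 := by
      intro x
      have hx := hE x
      have hmx := hE (-x)
      rw [inner_neg_right, inner_neg_right, norm_neg] at hmx
      rw [inner_sub_left, inner_sub_left, real_inner_smul_left, real_inner_smul_left]
      linarith
    have hvec : b i - lam • b i - mu • b j = 0 := by
      have := hodd (b i - lam • b i - mu • b j)
      exact inner_self_eq_zero.mp this
    -- even part with a unit vector
    have hunit : ‖(EuclideanSpace.single 0 (1:ℝ) : E3)‖ = 1 := by simp
    have heven : c i = c i * lam ^ 2 + c j * mu ^ 2 := by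
      have hx := hE (EuclideanSpace.single 0 (1:ℝ))
      have hmx := hE (-(EuclideanSpace.single 0 (1:ℝ) : E3))
      rw [inner_neg_right, inner_neg_right, norm_neg] at hmx
      rw [hunit] at hx hmx
      nlinarith [hx, hmx]
    constructor
    · -- m j • b i = m i • b j
      have h1 : (1 - lam) • b i = mu • b j := by
        rw [sub_smul, one_smul]
        exact sub_eq_zero.mp hvec
      have h2 : (1 - lam) = 2 * m j / M := by rw [hlam]; field_simp; ring
      have h3 : m j • b i = (M / 2) • ((1 - lam) • b i) := by
        rw [smul_smul, h2]; congr 1; field_simp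
      rw [h3, h1, smul_smul, hmu]
      congr 1
      field_simp
    · have h2 : 1 - lam ^ 2 = 4 * m i * m j / M ^ 2 := by
        rw [hlam]; field_simp; ring
      have h3 : mu ^ 2 = 4 * m i ^ 2 / M ^ 2 := by rw [hmu]; field_simp; ring
      have h4 : c i * (4 * m i * m j / M ^ 2) = c j * (4 * m i ^ 2 / M ^ 2) := by
        rw [← h2, ← h3]; linarith [heven]
      have h5 : c i * (m i * m j) = c j * m i ^ 2 := by
        have hM2 : (M:ℝ) ^ 2 ≠ 0 := pow_ne_zero 2 hMne
        field_simp at h4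
        linarith
      have hmi := (hm i).ne'
      have : m i * (m j * c i) = m i * (m i * c j) := by ring_nf; ring_nf at h5; linarith
      exact mul_left_cancel₀ hmi this
  -- step 3: assemble
  refine ⟨fun i => h i 0, (m 0)⁻¹ • b 0, 2 * c 0 / m 0, fun i => ?_⟩
  have hm0 := (hm 0).ne'
  have hbi : b i = m i • ((m 0)⁻¹ • b 0) := by
    have h1 := (hcross i 0).1
    -- m 0 • b i = m i • b 0
    have h2 : b i = (m 0)⁻¹ • (m i • b 0) := by
      rw [← h1, smul_smul, inv_mul_cancel₀ hm0, one_smul]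
    rw [h2, smul_comm]
  have hci : c i = m i * (2 * c 0 / m 0) / 2 := by
    have h1 := (hcross i 0).2
    field_simp
    linarith
  apply Filter.Eventually.of_forall
  intro v
  rw [hbc i v, hbi, hci, real_inner_smul_left]
  ring
end
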